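/- Let C and D be triangulated categories with weight structures w and v, where w is bounded. An exact functor F : C → D is left weight-exact if and only if F(C^{w=0}) ⊆ D^{v≤0}, and right weight-exact if and only if F(C^{w=0}) ⊆ D^{v≥0}. -/

import Mathlib

open CategoryTheory Category Limits Pretriangulated

/-- `X` is a retract of `Y`. -/
def IsRetract {C : Type*} [Category C] (X Y : C) : Prop :=
  ∃ (i : X ⟶ Y) (r : Y ⟶ X), i ≫ r = 𝟙 X

/-- A weight structure on a triangulated category `C`, given by the pair of classes
`le = C^{w≤0}` and `ge = C^{w≥0}` (Bondarko). -/
structure IsWeightStructure (C : Type*) [Category C] [HasZeroObject C] [HasShift C ℤ]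
    [Preadditive C] [∀ n : ℤ, (shiftFunctor C n).Additive] [Pretriangulated C]
    (le ge : Set C) : Prop where
  le_retract : ∀ ⦃X Y : C⦄, Y ∈ le → IsRetract X Y → X ∈ le
  ge_retract : ∀ ⦃X Y : C⦄, Y ∈ ge → IsRetract X Y → X ∈ ge
  le_shift : ∀ ⦃X : C⦄, X ∈ le → X⟦(1 : ℤ)⟧ ∈ le
  ge_shift : ∀ ⦃X : C⦄, X ∈ ge → X⟦(-1 : ℤ)⟧ ∈ ge
  orth : ∀ ⦃X Y : C⦄, X ∈ ge → Y ∈ le → ∀ f : X ⟶ Y⟦(1 : ℤ)⟧, f = 0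
  decomp : ∀ M : C, ∃ (A B : C) (_ : A ∈ le) (_ : B ∈ ge)
    (f : M ⟶ A) (g : A ⟶ B) (h : B ⟶ M⟦(1 : ℤ)⟧), Triangle.mk f g h ∈ distTriang C
variable {C : Type*} [Category C] [HasZeroObject C] [HasShift C ℤ]
  [Preadditive C] [∀ n : ℤ, (shiftFunctor C n).Additive] [Pretriangulated C]
variable {D : Type*} [Category D] [HasZeroObject D] [HasShift D ℤ]
  [Preadditive D] [∀ n : ℤ, (shiftFunctor D n).Additive] [Pretriangulated D]

namespace WeightAux

lemma mem_of_iso {S : Set C} (hS : ∀ ⦃X Y : C⦄, Y ∈ S → IsRetract X Y → X ∈ S)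
    {X Y : C} (e : X ≅ Y) (hY : Y ∈ S) : X ∈ S :=
  hS hY ⟨e.hom, e.inv, e.hom_inv_id⟩

/-- All morphisms from `X` to `Y` vanish. -/
def HomZero (X Y : C) : Prop := ∀ f : X ⟶ Y, f = 0

lemma homZero_of_iso {X X' Y Y' : C} (h : HomZero X Y) (e : X' ≅ X) (e' : Y' ≅ Y) :
    HomZero X' Y' := by
  intro f
  have h0 : e.inv ≫ f ≫ e'.hom = 0 := h _
  calc f = e.hom ≫ (e.inv ≫ f ≫ e'.hom) ≫ e'.inv := by simp
  _ = 0 := by rw [h0]; simp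

lemma homZero_shift {X Y : C} (h : HomZero X Y) (a : ℤ) : HomZero (X⟦a⟧) (Y⟦a⟧) := by
  intro f
  have hε := shiftFunctorCompIsoId C a (-a) (by ring)
  have hg : hε.inv.app X ≫ (shiftFunctor C (-a)).map f ≫ hε.hom.app Y = 0 := h _
  have hz : (shiftFunctor C (-a)).map f = 0 := by
    calc (shiftFunctor C (-a)).map f
        = hε.hom.app X ≫ (hε.inv.app X ≫ (shiftFunctor C (-a)).map f ≫ hε.hom.app Y) ≫
            hε.inv.app Y := by simp
      _ = 0 := by rw [hg]; simp
  exact (shiftFunctor C (-a)).map_injective (by rw [hz, Functor.map_zero])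

/-- `X⟦r⟧ ≅ X⟦p⟧⟦q⟧` when `p + q = r`. -/
def shiftIso (X : C) (p q r : ℤ) (h : p + q = r) : X⟦r⟧ ≅ (X⟦p⟧)⟦q⟧ :=
  (shiftFunctorAdd' C p q r h).app X

lemma homZero_src0 {X Y : C} (h : HomZero (X⟦(0 : ℤ)⟧) Y) : HomZero X Y :=
  homZero_of_iso h ((shiftFunctorZero C ℤ).app X).symm (Iso.refl Y)

lemma homZero_tgt0 {X Y : C} (h : HomZero X (Y⟦(0 : ℤ)⟧)) : HomZero X Y :=
  homZero_of_iso h (Iso.refl X) ((shiftFunctorZero C ℤ).app Y).symm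

variable {le ge : Set C}

lemma le0 (w : IsWeightStructure C le ge) {Y : C} (h : Y ∈ le) : Y⟦(0 : ℤ)⟧ ∈ le :=
  mem_of_iso w.le_retract ((shiftFunctorZero C ℤ).app Y) h

lemma ge0 (w : IsWeightStructure C le ge) {Y : C} (h : Y ∈ ge) : Y⟦(0 : ℤ)⟧ ∈ ge :=
  mem_of_iso w.ge_retract ((shiftFunctorZero C ℤ).app Y) h

lemma le_shift_nonneg (w : IsWeightStructure C le ge) {Y : C} (hY : Y ∈ le) (a : ℤ)
    (ha : 0 ≤ a) : Y⟦a⟧ ∈ le := by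
  obtain ⟨n, rfl⟩ : ∃ n : ℕ, a = (n : ℤ) := ⟨a.toNat, by omega⟩
  clear ha
  induction n with
  | zero => exact le0 w hY
  | succ n ih =>
    exact mem_of_iso w.le_retract (shiftIso Y (n : ℤ) 1 ((n + 1 : ℕ) : ℤ) (by push_cast; ring))
      (w.le_shift ih)

lemma ge_shift_nonpos (w : IsWeightStructure C le ge) {Y : C} (hY : Y ∈ ge) (a : ℤ)
    (ha : a ≤ 0) : Y⟦a⟧ ∈ ge := by
  obtain ⟨n, rfl⟩ : ∃ n : ℕ, a = -(n : ℤ) := ⟨(-a).toNat, by omega⟩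
  clear ha
  induction n with
  | zero =>
    exact mem_of_iso w.ge_retract ((shiftFunctorZero' C (-((0 : ℕ) : ℤ)) (by simp)).app Y) hY
  | succ n ih =>
    exact mem_of_iso w.ge_retract
      (shiftIso Y (-(n : ℤ)) (-1) (-((n + 1 : ℕ) : ℤ)) (by push_cast; ring)) (w.ge_shift ih)

lemma orthZ (w : IsWeightStructure C le ge) {X Y : C} (hX : X ∈ ge) (hY : Y ∈ le)
    {b : ℤ} (hb : 0 < b) : HomZero X (Y⟦b⟧) := by
  have h1 : Y⟦b - 1⟧ ∈ le := le_shift_nonneg w hY _ (by omega)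
  have h2 : HomZero X ((Y⟦b - 1⟧)⟦(1 : ℤ)⟧) := w.orth hX h1
  exact homZero_of_iso h2 (Iso.refl X) (shiftIso Y (b - 1) 1 b (by ring))

/-- Master orthogonality lemma with shifts on both sides. -/
lemma orthM (w : IsWeightStructure C le ge) {X Y : C} {a b c d : ℤ}
    (hX : X⟦c⟧ ∈ ge) (hY : Y⟦d⟧ ∈ le) (h : a - c < b - d) :
    HomZero (X⟦a⟧) (Y⟦b⟧) := by
  have h1 : HomZero (X⟦c⟧) ((Y⟦d⟧)⟦b - d - (a - c)⟧) := orthZ w hX hY (by omega)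
  have h2 := homZero_shift h1 (a - c)
  refine homZero_of_iso h2 (shiftIso X c (a - c) a (by ring)) ?_
  exact shiftIso Y d (b - d) b (by ring) ≪≫
    shiftIso (Y⟦d⟧) (b - d - (a - c)) (a - c) (b - d) (by ring)

lemma mem_le_of_orth (w : IsWeightStructure C le ge) {Y : C}
    (h : ∀ X ∈ ge, HomZero X (Y⟦(1 : ℤ)⟧)) : Y ∈ le := by
  obtain ⟨A, B, hA, hB, f, g, h', hT⟩ := w.decomp Y
  have hzero : h' = 0 := h B hB h'
  obtain ⟨r, hr⟩ := Triangle.yoneda_exact₂ _ (inv_rot_of_distTriang _ hT) (𝟙 Y)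
    (by
      have key : ∀ {P Q R : C} (u : P ⟶ Q) (e : (shiftFunctor C (-1 : ℤ)).obj Q ⟶ R),
          u = 0 → (-(u⟦(-1 : ℤ)⟧') ≫ e) ≫ 𝟙 R = 0 := by
        intro P Q R u e hu; subst hu; simp
      exact key _ _ hzero)
  exact w.le_retract hA ⟨f, r, hr.symm⟩

lemma mem_ge_of_orth (w : IsWeightStructure C le ge) {X : C}
    (h : ∀ Y ∈ le, HomZero X (Y⟦(1 : ℤ)⟧)) : X ∈ ge := by
  obtain ⟨A, B, hA, hB, f, g, h', hT⟩ := w.decomp (X⟦(-1 : ℤ)⟧)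
  have hf : f = 0 := by
    have h1 := homZero_shift (h A hA) (-1)
    exact homZero_of_iso h1 (Iso.refl _)
      ((shiftFunctorCompIsoId C (1 : ℤ) (-1) (by ring)).app A).symm f
  have hT2 := rot_of_distTriang _ (rot_of_distTriang _ hT)
  obtain ⟨s, hs⟩ := Triangle.coyoneda_exact₂ _ hT2 (𝟙 (X⟦(-1 : ℤ)⟧⟦(1 : ℤ)⟧))
    (by
      have key : ∀ {P Q : C} (u : P ⟶ Q), u = 0 → 𝟙 (P⟦(1 : ℤ)⟧) ≫ (-(u⟦(1 : ℤ)⟧')) = 0 := by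
        intro P Q u hu; subst hu; simp
      exact key _ hf)
  have hmem : X⟦(-1 : ℤ)⟧⟦(1 : ℤ)⟧ ∈ ge := w.ge_retract hB ⟨s, h', hs.symm⟩
  exact mem_of_iso w.ge_retract ((shiftFunctorCompIsoId C (-1 : ℤ) (1 : ℤ) (by ring)).app X).symm
    hmem

lemma ext_le (w : IsWeightStructure C le ge) {T : Triangle C} (hT : T ∈ distTriang C)
    (h₁ : T.obj₁ ∈ le) (h₃ : T.obj₃ ∈ le) : T.obj₂ ∈ le := by
  refine mem_le_of_orth w ?_
  intro W hW φ
  have hT3 := rot_of_distTriang _ (rot_of_distTriang _ (rot_of_distTriang _ hT))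
  obtain ⟨χ, hχ⟩ := Triangle.coyoneda_exact₂ _ hT3 φ (w.orth hW h₃ _)
  rw [hχ, w.orth hW h₁ χ]; exact zero_comp

lemma ext_ge (w : IsWeightStructure C le ge) {T : Triangle C} (hT : T ∈ distTriang C)
    (h₁ : T.obj₁ ∈ ge) (h₃ : T.obj₃ ∈ ge) : T.obj₂ ∈ ge := by
  refine mem_ge_of_orth w ?_
  intro Y hY φ
  obtain ⟨ψ, hψ⟩ := Triangle.yoneda_exact₂ _ hT φ (w.orth h₁ hY _)
  rw [hψ, w.orth h₃ hY ψ, comp_zero]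

lemma main_le (w : IsWeightStructure C le ge) {le' ge' : Set D}
    (v : IsWeightStructure D le' ge') (F : C ⥤ D) [F.CommShift ℤ] [F.IsTriangulated]
    (hheart : ∀ X ∈ le ∩ ge, F.obj X ∈ le') :
    ∀ (m : ℕ) (X : C), X ∈ le → X⟦-(m : ℤ)⟧ ∈ ge → F.obj X ∈ le' := by
  intro m
  induction m with
  | zero =>
    intro X hX hX'
    refine hheart X ⟨hX, ?_⟩
    exact mem_of_iso w.ge_retract ((shiftFunctorZero' C (-((0 : ℕ) : ℤ)) (by simp)).app X).symm
      hX'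
  | succ m ih =>
    intro X hX hX'
    push_cast at hX'
    obtain ⟨A, B, hA, hB, f, g, h', hT⟩ := w.decomp (X⟦(-1 : ℤ)⟧)
    -- `B` is in the heart
    have hBle : B ∈ le := by
      refine mem_le_of_orth w ?_
      intro W hW φ
      have hT4 := rot_of_distTriang _ (rot_of_distTriang _ (rot_of_distTriang _
        (rot_of_distTriang _ hT)))
      have hXle : X⟦(-1 : ℤ)⟧⟦(1 : ℤ)⟧ ∈ le :=
        mem_of_iso w.le_retract ((shiftFunctorCompIsoId C (-1 : ℤ) (1 : ℤ) (by ring)).app X) hX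
      obtain ⟨χ, hχ⟩ := Triangle.coyoneda_exact₂ _ hT4 φ (w.orth hW hXle _)
      rw [hχ, w.orth hW hA χ]; exact zero_comp
    -- `A` has shorter weight range
    have hAge : A⟦-(m : ℤ)⟧ ∈ ge := by
      refine mem_ge_of_orth w ?_
      intro Y hY
      have h1 : HomZero A (Y⟦(m : ℤ) + 1⟧) := by
        intro φ
        obtain ⟨ψ, hψ⟩ := Triangle.yoneda_exact₂ _ hT φ
          (orthM w (a := -1) (b := (m : ℤ) + 1) hX' (le0 w hY) (by omega) _)
        rw [hψ, homZero_src0 (orthM w (a := 0) (b := (m : ℤ) + 1) (ge0 w hB) (le0 w hY)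
          (by omega)) ψ]; exact comp_zero
      have h2 := homZero_shift h1 (-(m : ℤ))
      exact homZero_of_iso h2 (Iso.refl _) (shiftIso Y ((m : ℤ) + 1) (-(m : ℤ)) 1 (by ring))
    have hFA := ih A hA hAge
    have hFT := F.map_distinguished _ (rot_of_distTriang _ (rot_of_distTriang _ hT))
    have hmid : F.obj (X⟦(-1 : ℤ)⟧⟦(1 : ℤ)⟧) ∈ le' := by
      refine ext_le v hFT ?_ ?_
      · exact hheart B ⟨hBle, hB⟩
      · exact mem_of_iso v.le_retract ((F.commShiftIso (1 : ℤ)).app A) (v.le_shift hFA)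
    exact mem_of_iso v.le_retract
      (F.mapIso ((shiftFunctorCompIsoId C (-1 : ℤ) (1 : ℤ) (by ring)).app X).symm) hmid

lemma main_ge (w : IsWeightStructure C le ge) {le' ge' : Set D}
    (v : IsWeightStructure D le' ge') (F : C ⥤ D) [F.CommShift ℤ] [F.IsTriangulated]
    (hheart : ∀ X ∈ le ∩ ge, F.obj X ∈ ge') :
    ∀ (m : ℕ) (X : C), X ∈ ge → X⟦(m : ℤ)⟧ ∈ le → F.obj X ∈ ge' := by
  intro m
  induction m with
  | zero =>
    intro X hX hX'
    exact hheart X ⟨mem_of_iso w.le_retract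
      ((shiftFunctorZero' C ((0 : ℕ) : ℤ) (by simp)).app X).symm hX', hX⟩
  | succ m ih =>
    intro X hX hX'
    push_cast at hX'
    obtain ⟨A, B, hA, hB, f, g, h', hT⟩ := w.decomp X
    -- `A` is in the heart
    have hAge : A ∈ ge := by
      refine mem_ge_of_orth w ?_
      intro Y hY φ
      obtain ⟨ψ, hψ⟩ := Triangle.yoneda_exact₂ _ hT φ (w.orth hX hY _)
      rw [hψ, w.orth hB hY ψ]; exact comp_zero
    -- `B` has shorter weight range
    have hBle : B⟦(m : ℤ)⟧ ∈ le := by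
      refine mem_le_of_orth w ?_
      intro W hW
      have h1 : HomZero (W⟦-((m : ℤ) + 1)⟧) B := by
        intro φ'
        obtain ⟨χ, hχ⟩ := Triangle.coyoneda_exact₂ _ (rot_of_distTriang _ hT) φ'
          (orthM w (a := -((m : ℤ) + 1)) (b := 1) (ge0 w hW) hX' (by omega) _)
        rw [hχ, homZero_tgt0 (orthM w (a := -((m : ℤ) + 1)) (b := 0) (ge0 w hW) (le0 w hA)
          (by omega)) χ]; exact zero_comp
      have h2 := homZero_shift h1 ((m : ℤ) + 1)
      refine homZero_of_iso h2 ?_ ?_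
      · exact ((shiftFunctorCompIsoId C (-((m : ℤ) + 1)) ((m : ℤ) + 1) (by ring)).app W).symm
      · exact (shiftIso B (m : ℤ) 1 ((m : ℤ) + 1) rfl).symm
    have hFB := ih B hB hBle
    have hFT := F.map_distinguished _ (inv_rot_of_distTriang _ hT)
    refine ext_ge v hFT ?_ ?_
    · exact mem_of_iso v.ge_retract ((F.commShiftIso (-1 : ℤ)).app B) (v.ge_shift hFB)
    · exact hheart A ⟨hA, hAge⟩

end WeightAux

/-- Let `w` be a bounded weight structure on `C` (every object lies in some `C^{w≤i}`
and some `C^{w≥j}`, where `M ∈ C^{w≤i}` iff `M⟦i⟧ ∈ C^{w≤0}`, etc.) and `v` a weight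
structure on `D`. An exact functor `F : C ⥤ D` is left (resp. right) weight-exact if and
only if it sends the heart `C^{w=0}` into `D^{v≤0}` (resp. into `D^{v≥0}`). -/
theorem weightExact_iff_heart_of_bounded
    (le ge : Set C) (le' ge' : Set D)
    (w : IsWeightStructure C le ge) (v : IsWeightStructure D le' ge')
    (hbdd : ∀ M : C, (∃ i : ℤ, M⟦i⟧ ∈ le) ∧ (∃ j : ℤ, M⟦j⟧ ∈ ge))
    (F : C ⥤ D) [F.CommShift ℤ] [F.IsTriangulated] :
    ((∀ X ∈ le, F.obj X ∈ le') ↔ (∀ X ∈ le ∩ ge, F.obj X ∈ le')) ∧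
    ((∀ X ∈ ge, F.obj X ∈ ge') ↔ (∀ X ∈ le ∩ ge, F.obj X ∈ ge')) := by
  open WeightAux in
  constructor
  · constructor
    · intro h X hX
      exact h X hX.1
    · intro hheart X hX
      obtain ⟨-, j, hj⟩ := hbdd X
      have hm : X⟦-(((-j).toNat : ℕ) : ℤ)⟧ ∈ ge := by
        have h1 : X⟦j⟧⟦-(((-j).toNat : ℕ) : ℤ) - j⟧ ∈ ge :=
          ge_shift_nonpos w hj _ (by omega)
        exact mem_of_iso w.ge_retract
          (shiftIso X j (-(((-j).toNat : ℕ) : ℤ) - j) _ (by ring)) h1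
      exact main_le w v F hheart _ X hX hm
  · constructor
    · intro h X hX
      exact h X hX.2
    · intro hheart X hX
      obtain ⟨⟨i, hi⟩, -⟩ := hbdd X
      have hm : X⟦((i.toNat : ℕ) : ℤ)⟧ ∈ le := by
        have h1 : X⟦i⟧⟦((i.toNat : ℕ) : ℤ) - i⟧ ∈ le :=
          le_shift_nonneg w hi _ (by omega)
        exact mem_of_iso w.le_retract
          (shiftIso X i (((i.toNat : ℕ) : ℤ) - i) _ (by ring)) h1
      exact main_ge w v F hheart _ X hX hm
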